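/- Let a₁ be a bounded sesquilinear form on V × W with inf-sup constant c > 0 and nondegenerate in the second component, let 𝒢 ⊆ X be nonempty and open, let 𝔠 : 𝒢 → S(H × W, 𝕂) and Φ : 𝒢 → W*, and assume strong well-posedness for every m ∈ 𝒢 (for each φ ∈ W* there is exactly one u ∈ V with a₁(u,w) + 𝔠(m)(ju,w) = φ(w) for all w ∈ W). Let S : 𝒢 → V be defined by: S(m) is the unique u ∈ V with a₁(u,w) + 𝔠(m)(ju,w) = Φ(m)(w) for all w ∈ W. If Φ and 𝔠 are analytic on 𝒢 (locally given by their Taylor series expansions), then S is analytic on 𝒢. -/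

import Mathlib

set_option maxHeartbeats 1000000 in
/-- Theorem 5.1 b): if the data maps `Φ` and `𝔠` are analytic on `𝒢` and the
variational problem is strongly well-posed for every `m ∈ 𝒢`, then the
parameter-to-state operator `S` is analytic on `𝒢`. -/
theorem parameter_to_state_analytic
    {𝕂 V W H X : Type*} [RCLike 𝕂]
    [NormedAddCommGroup V] [NormedSpace 𝕂 V] [CompleteSpace V]
    [NormedAddCommGroup W] [NormedSpace 𝕂 W] [CompleteSpace W] [Nontrivial W]
    [NormedAddCommGroup H] [NormedSpace 𝕂 H] [CompleteSpace H]
    [NormedAddCommGroup X] [NormedSpace 𝕂 X] [CompleteSpace X]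
    (hrefl : Function.Surjective ⇑(NormedSpace.inclusionInDoubleDual 𝕂 W))
    (j : V →L[𝕂] H) (hj : Function.Injective ⇑j)
    (a₁ : V →L[𝕂] (W →SL[starRingEnd 𝕂] 𝕂))
    (c : ℝ) (hc : 0 < c)
    (hinfsup : ∀ v : V, c * ‖v‖ ≤ ‖a₁ v‖)
    (hnondeg : ∀ w : W, (∀ v : V, a₁ v w = 0) → w = 0)
    (𝒢 : Set X) (h𝒢open : IsOpen 𝒢) (h𝒢ne : 𝒢.Nonempty)
    (𝔠 : X → (H →L[𝕂] (W →SL[starRingEnd 𝕂] 𝕂)))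
    (Φ : X → (W →SL[starRingEnd 𝕂] 𝕂))
    (hwp : ∀ m ∈ 𝒢, ∀ φ : W →SL[starRingEnd 𝕂] 𝕂,
      ∃! u : V, ∀ w : W, a₁ u w + 𝔠 m (j u) w = φ w)
    (S : X → V)
    (hS : ∀ m ∈ 𝒢, ∀ w : W, a₁ (S m) w + 𝔠 m (j (S m)) w = Φ m w)
    (hΦ : AnalyticOnNhd 𝕂 Φ 𝒢) (h𝔠 : AnalyticOnNhd 𝕂 𝔠 𝒢) :
    AnalyticOnNhd 𝕂 S 𝒢 := by
  classical
  let Y := W →SL[starRingEnd 𝕂] 𝕂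
  -- `Y` is nontrivial, since `a₁` is nondegenerate in the second component
  have hYnt : Nontrivial Y := by
    by_contra hsub
    rw [not_nontrivial_iff_subsingleton] at hsub
    obtain ⟨w, hw⟩ := exists_ne (0 : W)
    exact hw (hnondeg w (fun v => by
      have : a₁ v = 0 := Subsingleton.elim _ _
      simp [this]))
  -- the affine operator family `f m = a₁ + 𝔠 m ∘ j`
  set f : X → (V →L[𝕂] Y) := fun m => a₁ + (𝔠 m).comp j with hf
  have hf_apply : ∀ m u w, f m u w = a₁ u w + 𝔠 m (j u) w := by
    intro m u w
    rfl
  have hf_an : ∀ m ∈ 𝒢, AnalyticAt 𝕂 f m := by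
    intro m hm
    have := (ContinuousLinearMap.analyticAt (F := V →L[𝕂] Y)
      ((ContinuousLinearMap.compL 𝕂 V H Y).flip j) (𝔠 m)).comp (h𝔠 m hm)
    exact analyticAt_const.add this
  -- bijectivity of `f m` for `m ∈ 𝒢`
  have hbij : ∀ m ∈ 𝒢, Function.Bijective (f m) := by
    intro m hm
    constructor
    · intro u₁ u₂ h12
      obtain ⟨u, hu, huniq⟩ := hwp m hm (f m u₁)
      have h1 : u₁ = u := huniq u₁ (fun w => (hf_apply m u₁ w).symm)
      have h2 : u₂ = u := huniq u₂ (fun w => by rw [← hf_apply m u₂ w, h12])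
      rw [h1, h2]
    · intro φ
      obtain ⟨u, hu, _⟩ := hwp m hm φ
      exact ⟨u, by ext w; rw [hf_apply m u w]; exact hu w⟩
  -- a fixed reference equivalence
  obtain ⟨m₀, hm₀⟩ := h𝒢ne
  have hker : (f m₀).ker = ⊥ :=
    LinearMap.ker_eq_bot.mpr (hbij m₀ hm₀).1
  have hrange : (f m₀).range = ⊤ :=
    LinearMap.range_eq_top.mpr (hbij m₀ hm₀).2
  set e₀ : V ≃L[𝕂] Y := ContinuousLinearEquiv.ofBijective (f m₀) hker hrange with he₀
  have he₀coe : ⇑e₀ = ⇑(f m₀) := ContinuousLinearEquiv.coeFn_ofBijective _ hker hrange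
  -- the family `h m = f m ∘ e₀.symm : Y →L Y`
  set hfam : X → (Y →L[𝕂] Y) := fun m => (f m).comp (e₀.symm : Y →L[𝕂] V) with hhfam
  have hfam_an : ∀ m ∈ 𝒢, AnalyticAt 𝕂 hfam m := by
    intro m hm
    exact (ContinuousLinearMap.analyticAt (F := Y →L[𝕂] Y)
      ((ContinuousLinearMap.compL 𝕂 Y V Y).flip
        (e₀.symm : Y →L[𝕂] V)) (f m)).comp (hf_an m hm)
  have hfam_unit : ∀ m ∈ 𝒢, IsUnit (hfam m) := by
    intro m hm
    rw [ContinuousLinearMap.isUnit_iff_bijective]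
    exact (hbij m hm).comp e₀.symm.bijective
  -- the candidate analytic formula for `S`
  set T : X → V := fun m => e₀.symm (Ring.inverse (hfam m) (Φ m)) with hT
  have hT_an : ∀ m ∈ 𝒢, AnalyticAt 𝕂 T m := by
    intro m hm
    have h1 : AnalyticAt 𝕂 (fun m => Ring.inverse (hfam m)) m := by
      have := analyticAt_inverse (𝕜 := 𝕂) (A := Y →L[𝕂] Y) (hfam_unit m hm).unit
      rw [IsUnit.unit_spec] at this
      exact this.comp (hfam_an m hm)
    have h2 : AnalyticAt 𝕂 (fun m => Ring.inverse (hfam m) (Φ m)) m :=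
      ((ContinuousLinearMap.id 𝕂 (Y →L[𝕂] Y)).analyticAt_bilinear
        (Ring.inverse (hfam m), Φ m)).comp₂ h1 (hΦ m hm)
    exact ((e₀.symm : Y →L[𝕂] V).analyticAt _).comp h2
  -- `S = T` on `𝒢`
  have hST : ∀ m ∈ 𝒢, S m = T m := by
    intro m hm
    have hfS : f m (S m) = Φ m := by
      ext w
      rw [hf_apply]; exact hS m hm w
    have key : hfam m (e₀ (S m)) = Φ m := by
      show (f m) (e₀.symm (e₀ (S m))) = Φ m
      rw [e₀.symm_apply_apply, hfS]
    have : Ring.inverse (hfam m) (Φ m) = e₀ (S m) := by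
      rw [← key]
      have := Ring.inverse_mul_cancel _ (hfam_unit m hm)
      calc Ring.inverse (hfam m) (hfam m (e₀ (S m)))
          = (Ring.inverse (hfam m) * hfam m) (e₀ (S m)) := rfl
        _ = e₀ (S m) := by rw [this]; rfl
    rw [hT]
    simp only [this, e₀.symm_apply_apply]
  -- conclude by local congruence on the open set `𝒢`
  intro m hm
  refine (hT_an m hm).congr ?_
  filter_upwards [h𝒢open.mem_nhds hm] with x hx
  exact (hST x hx).symm
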